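/- For any N ≥ 3, h > 0, an invertible matrix M ∈ ℝ^{n×n}, and arbitrary matrices A_{η,k}, A_{v,k} ∈ ℝ^{n×n} (k = 1,…,N−1), define A_k = [[A_{η,k}, h I_n],[0, I_n + h A_{v,k}]] ∈ ℝ^{2n×2n} and B_k = [[0],[h M]] ∈ ℝ^{2n×n}, and let G_k = A_{N−1}⋯A_{k+1} B_k (G_{N−1} = B_{N−1}). Then the stacked matrix 𝒢 = [G_1 ⋯ G_{N−1}] ∈ ℝ^{2n×(N−1)n} has rank 2n, and consequently 𝒢 R⁻¹ 𝒢ᵀ is positive definite for every symmetric positive definite R ∈ ℝ^{(N−1)n×(N−1)n}. -/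

import Mathlib

open Matrix

/-- Full-row-rank lemma for the MPSP terminal sensitivity matrix: for `N ≥ 3`,
`h > 0`, invertible inertia `M`, the stacked matrix `𝒢 = [G_1 ⋯ G_{N−1}]`
has rank `2n`, hence `𝒢 R⁻¹ 𝒢ᵀ ≻ 0` for every `R ≻ 0`. -/
theorem stacked_sensitivity_full_row_rank {n N : ℕ} (hN : 3 ≤ N)
    (h : ℝ) (hh : 0 < h)
    (M : Matrix (Fin n) (Fin n) ℝ) (hM : IsUnit M.det)
    (Aη Av : ℕ → Matrix (Fin n) (Fin n) ℝ)
    (A : ℕ → Matrix (Fin n ⊕ Fin n) (Fin n ⊕ Fin n) ℝ)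
    (hA : ∀ k, A k = Matrix.fromBlocks (Aη k) (h • (1 : Matrix (Fin n) (Fin n) ℝ))
          0 (1 + h • Av k))
    (B : ℕ → Matrix (Fin n ⊕ Fin n) (Fin n) ℝ)
    (hB : ∀ k, B k = Matrix.fromRows 0 (h • M))
    (G : ℕ → Matrix (Fin n ⊕ Fin n) (Fin n) ℝ)
    (hG : ∀ k, G k = (((List.range' (k + 1) (N - 1 - k)).map A).reverse).prod * B k)
    (𝒢 : Matrix (Fin n ⊕ Fin n) (Fin (N - 1) × Fin n) ℝ)
    (h𝒢 : ∀ i kj, 𝒢 i kj = G ((kj.1 : ℕ) + 1) i kj.2) :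
    𝒢.rank = 2 * n ∧
    ∀ R : Matrix (Fin (N - 1) × Fin n) (Fin (N - 1) × Fin n) ℝ, R.PosDef →
      (𝒢 * R⁻¹ * 𝒢ᵀ).PosDef := by
  -- G at the last two indices
  have hGN1 : G (N - 1) = Matrix.fromRows 0 (h • M) := by
    rw [hG, show N - 1 - (N - 1) = 0 from by omega]
    simp [hB]
  have hGN2 : G (N - 2) =
      @HMul.hMul _ _ _ Matrix.instHMulOfFintypeOfMulOfAddCommMonoid
        (Matrix.fromBlocks (Aη (N - 1)) (h • (1 : Matrix (Fin n) (Fin n) ℝ))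
        0 (1 + h • Av (N - 1))) (Matrix.fromRows 0 (h • M)) := by
    rw [hG, show N - 2 + 1 = N - 1 from by omega, show N - 1 - (N - 2) = 1 from by omega]
    simp [hB, hA]
  -- the column selection
  set i1 : Fin (N - 1) := ⟨N - 3, by omega⟩ with hi1
  set i2 : Fin (N - 1) := ⟨N - 2, by omega⟩ with hi2
  set idx : Fin n ⊕ Fin n → Fin (N - 1) × Fin n :=
    Sum.elim (fun j => (i1, j)) (fun j => (i2, j)) with hidx
  have hS : 𝒢.submatrix id idx =
      Matrix.fromBlocks (h • h • M) (0 : Matrix (Fin n) (Fin n) ℝ)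
        ((1 + h • Av (N - 1)) * (h • M)) (h • M) := by
    have hcol : 𝒢.submatrix id idx =
        Matrix.fromCols (G (N - 2)) (G (N - 1)) := by
      ext i c
      cases c with
      | inl j =>
        simp only [Matrix.submatrix_apply, id_eq, hidx, Sum.elim_inl,
          Matrix.fromCols_apply_inl, h𝒢, hi1]
        rw [show N - 3 + 1 = N - 2 from by omega]
      | inr j =>
        simp only [Matrix.submatrix_apply, id_eq, hidx, Sum.elim_inr,
          Matrix.fromCols_apply_inr, h𝒢, hi2]
        rw [show N - 2 + 1 = N - 1 from by omega]
    rw [hcol, hGN1, hGN2, Matrix.fromBlocks_mul_fromRows,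
      Matrix.fromCols_fromRows_eq_fromBlocks]
    simp [Matrix.smul_mul, smul_smul, mul_comm]
  -- the selected 2n × 2n submatrix is invertible
  have hdet : IsUnit (𝒢.submatrix id idx).det := by
    rw [hS, Matrix.det_fromBlocks_zero₁₂, Matrix.det_smul, Matrix.det_smul]
    simp only [Fintype.card_fin]
    have hu : IsUnit (h ^ n) := (pow_ne_zero n hh.ne').isUnit
    exact ((hu.mul (hu.mul hM)).mul (hu.mul hM))
  have hrankS : (𝒢.submatrix id idx).rank = Fintype.card (Fin n ⊕ Fin n) :=
    Matrix.rank_of_isUnit _ ((Matrix.isUnit_iff_isUnit_det _).mpr hdet)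
  -- rank bounds
  have hmul : 𝒢 * (1 : Matrix (Fin (N - 1) × Fin n) (Fin (N - 1) × Fin n) ℝ).submatrix
      (Equiv.refl _) idx = 𝒢.submatrix id idx := by
    rw [Matrix.mul_submatrix_one]
    rfl
  have hle : Fintype.card (Fin n ⊕ Fin n) ≤ 𝒢.rank := by
    rw [← hrankS, ← hmul]
    exact Matrix.rank_mul_le_left _ _
  have hge := 𝒢.rank_le_card_height
  have hcard : Fintype.card (Fin n ⊕ Fin n) = 2 * n := by
    simp [two_mul]
  have hrank : 𝒢.rank = 2 * n := by omega
  refine ⟨hrank, fun R hR => ?_⟩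
  -- surjectivity of 𝒢.mulVecLin
  have hsurj : Function.Surjective 𝒢.mulVecLin := by
    rw [← LinearMap.range_eq_top]
    apply Submodule.eq_top_of_finrank_eq
    rw [← Matrix.rank, hrank]
    simp [Module.finrank_pi, two_mul]
  -- 𝒢ᵀ *ᵥ x ≠ 0 for x ≠ 0
  have hker : ∀ x : Fin n ⊕ Fin n → ℝ, x ≠ 0 → 𝒢ᵀ *ᵥ x ≠ 0 := by
    intro x hx hzero
    apply hx
    funext i
    have hdp : ∀ z : Fin n ⊕ Fin n → ℝ, x ⬝ᵥ z = 0 := by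
      intro z
      obtain ⟨y, hy⟩ := hsurj z
      have : x ⬝ᵥ (𝒢 *ᵥ y) = (𝒢ᵀ *ᵥ x) ⬝ᵥ y := by
        rw [Matrix.dotProduct_mulVec, Matrix.mulVec_transpose]
      rw [← hy, Matrix.mulVecLin_apply, this, hzero, zero_dotProduct]
    have := hdp x
    rw [dotProduct_self_eq_zero] at this
    rw [this]
  have hRi : R⁻¹.PosDef := hR.inv
  refine Matrix.PosDef.of_dotProduct_mulVec_pos ?_ ?_
  · have h1 : (𝒢 * R⁻¹ * 𝒢ᵀ)ᴴ = 𝒢 * R⁻¹ * 𝒢ᵀ := by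
      have : (𝒢ᵀ : Matrix (Fin (N - 1) × Fin n) (Fin n ⊕ Fin n) ℝ) = 𝒢ᴴ := by
        ext i j; simp [Matrix.conjTranspose_apply]
      rw [this, Matrix.conjTranspose_mul, Matrix.conjTranspose_mul,
        Matrix.conjTranspose_conjTranspose, hRi.isHermitian.eq, Matrix.mul_assoc]
    exact h1
  · intro x hx
    have hy := hker x hx
    have hpos := hRi.dotProduct_mulVec_pos hy
    simp only [star_trivial] at hpos ⊢
    rw [← Matrix.mulVec_mulVec, ← Matrix.mulVec_mulVec, Matrix.dotProduct_mulVec,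
      ← Matrix.mulVec_transpose]
    exact hpos
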